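/- If d' < d, d' ≡ d (mod q-1), and x^α is a monomial of degree d' in x_{m-j},...,x_m with α_{m-j} > 0, then the monomial x^{α'} = x_{m-j}^{α_{m-j}+λ(q-1)} x_{m-j+1}^{α_{m-j+1}} ··· x_m^{α_m}, where λ = (d-d')/(q-1), is homogeneous of degree d and has the same evaluation as x^α at every standard representative point of P^m. Consequently PRM_{d'}(m) ⊆ PRM_d(m). -/

import Mathlib

open MvPolynomial

/-- `stdRep F n` is the set of standard representatives of points of projective
`n`-space over `F`: vectors in `F^{n+1}` whose leftmost nonzero coordinate is `1`. -/
def stdRep (F : Type*) [Field F] (n : ℕ) : Set (Fin (n + 1) → F) :=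
  {v | ∃ i : Fin (n + 1), v i = 1 ∧ ∀ k < i, v k = 0}

/-- If `d' < d`, `d' ≡ d (mod q-1)`, and `x^α` is a monomial of degree `d'` in
`x_{m-j},...,x_m` with `α_{m-j} > 0` (here `i₀` is the index of `x_{m-j}`), then
`x^{α'}` with `α' = α + λ(q-1)·e_{i₀}`, `λ = (d-d')/(q-1)`, is homogeneous of
degree `d` and has the same evaluation as `x^α` at every standard representative
of `P^m`. Consequently `PRM_{d'}(m) ⊆ PRM_d(m)`. -/
lemma aux_pow {F : Type*} [Field F] [Fintype F] (a : F) (n L : ℕ) (hn : 0 < n) :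
    a ^ n = a ^ (n + L * (Fintype.card F - 1)) := by
  rcases eq_or_ne a 0 with rfl | ha
  · rw [zero_pow hn.ne', zero_pow (by omega)]
  · rw [pow_add, mul_comm L, pow_mul, FiniteField.pow_card_sub_one_eq_one a ha, one_pow, mul_one]

lemma aux_prod {F : Type*} [Field F] [Fintype F] {ι : Type*} [Fintype ι] [DecidableEq ι]
    (w : ι → F) (β : ι → ℕ) (i₀ : ι) (L : ℕ) (hi₀ : 0 < β i₀) :
    ∏ k, w k ^ β k = ∏ k, w k ^ (Function.update β i₀ (β i₀ + L * (Fintype.card F - 1))) k := by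
  rw [← Finset.prod_erase_mul _ _ (Finset.mem_univ i₀),
      ← Finset.prod_erase_mul _ _ (Finset.mem_univ i₀)]
  congr 1
  · apply Finset.prod_congr rfl
    intro k hk
    rw [Function.update_of_ne (Finset.ne_of_mem_erase hk)]
  · rw [Function.update_self]
    exact aux_pow _ _ _ hi₀


theorem stmt_14 (F : Type*) [Field F] [Fintype F] (m d d' : ℕ)
    (hd : d' < d) (hmod : d' ≡ d [MOD Fintype.card F - 1]) (hd' : 1 ≤ d')
    (α : Fin (m + 1) → ℕ) (i₀ : Fin (m + 1))
    (hα : ∑ k, α k = d') (hi₀ : 0 < α i₀) (hleft : ∀ k < i₀, α k = 0) :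
    (∑ k, (Function.update α i₀
        (α i₀ + (d - d') / (Fintype.card F - 1) * (Fintype.card F - 1))) k = d) ∧
    (∀ w ∈ stdRep F m,
      ∏ k, w k ^ α k =
        ∏ k, w k ^ (Function.update α i₀
          (α i₀ + (d - d') / (Fintype.card F - 1) * (Fintype.card F - 1))) k) ∧
    (∀ c : {v : Fin (m + 1) → F // v ∈ stdRep F m} → F,
      (∃ f : MvPolynomial (Fin (m + 1)) F, f.IsHomogeneous d' ∧
          ∀ w : {v : Fin (m + 1) → F // v ∈ stdRep F m}, eval w.1 f = c w) →
      (∃ f : MvPolynomial (Fin (m + 1)) F, f.IsHomogeneous d ∧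
          ∀ w : {v : Fin (m + 1) → F // v ∈ stdRep F m}, eval w.1 f = c w)) := by
  have hdvd : (Fintype.card F - 1) ∣ d - d' := (Nat.modEq_iff_dvd' hd.le).mp hmod
  have hq : 1 ≤ Fintype.card F - 1 := by
    have := Fintype.one_lt_card (α := F); omega
  have hL : (d - d') / (Fintype.card F - 1) * (Fintype.card F - 1) = d - d' :=
    Nat.div_mul_cancel hdvd
  set L := (d - d') / (Fintype.card F - 1) with hLdef
  refine ⟨?_, ?_, ?_⟩
  · rw [Finset.sum_update_of_mem (Finset.mem_univ i₀)]
    have hsplit : α i₀ + ∑ k ∈ Finset.univ.erase i₀, α k = d' := by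
      rw [Finset.add_sum_erase _ _ (Finset.mem_univ i₀)]; exact hα
    rw [Finset.sdiff_singleton_eq_erase]
    omega
  · intro w _
    exact aux_prod w α i₀ L hi₀
  · rintro c ⟨f, hf, hev⟩
    classical
    set pick : (Fin (m + 1) →₀ ℕ) → Fin (m + 1) := fun β =>
      if h : β.support.Nonempty then h.choose else 0 with hpick
    have hpick_mem : ∀ β ∈ f.support, 0 < β (pick β) := by
      intro β hβ
      have hdeg := hf (mem_support_iff.mp hβ)
      have hne : β.support.Nonempty := by
        rw [Finsupp.support_nonempty_iff]
        intro h0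
        rw [h0] at hdeg
        simp [Finsupp.sum_zero_index] at hdeg
        omega
      rw [hpick]
      simp only [dif_pos hne]
      have := hne.choose_spec
      exact Nat.pos_of_ne_zero (Finsupp.mem_support_iff.mp this)
    refine ⟨∑ β ∈ f.support,
      monomial (β + Finsupp.single (pick β) (L * (Fintype.card F - 1))) (coeff β f), ?_, ?_⟩
    · apply IsHomogeneous.sum
      intro β hβ
      apply isHomogeneous_monomial
      have hdeg := hf (mem_support_iff.mp hβ)
      rw [Finsupp.degree_eq_weight_one] at *
      rw [map_add]
      change (Finsupp.weight 1) β + (Finsupp.weight 1) (Finsupp.single (pick β) (L * (Fintype.card F - 1))) = d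
      rw [hdeg]
      have hs : (Finsupp.weight 1) (Finsupp.single (pick β) (L * (Fintype.card F - 1)))
          = L * (Fintype.card F - 1) := by
        rw [Finsupp.weight_apply, Finsupp.sum_single_index] <;> simp
      rw [hs]
      omega
    · intro w
      rw [← hev w, map_sum]
      rw [eval_eq' w.1 f]
      apply Finset.sum_congr rfl
      intro β hβ
      rw [eval_monomial]
      rw [Finsupp.prod_fintype _ _ (by intro i; exact pow_zero _)]
      congr 1
      have := aux_prod w.1 (fun k => β k) (pick β) L (hpick_mem β hβ)
      rw [this]
      apply Finset.prod_congr rfl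
      intro k _
      congr 1
      by_cases hk : k = pick β
      · subst hk; simp [Function.update_self]
      · simp [Function.update_of_ne hk, Finsupp.single_apply, Ne.symm hk]
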